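/- arXiv:1409.2445 — 4 statements merged into one kernel-verified Lean document; each statement's English description precedes it below -/
import Mathlib

section
/- Let P be a finite poset such that I(P) is a regular planar lattice, with canonical chain decomposition P = C_1 \cup C_2 into two chains, where \ell(C_1) = rank P. Suppose height(x) + depth(y) \le rank \hat{P} + 1 for all x, y \in P with x covering y. Then every minimal element v of the poset T(P) satisfies v(max(C_1)) = 1, where max(C_1) is the greatest element of the chain C_1. -/
open Classical

/-- `Hat P` is the poset `P` with a new least element `-∞ = ⊥` and a new
greatest element `∞ = ⊤` adjoined. -/
abbrev Hat (P : Type*) := WithBot (WithTop P)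

/-- The canonical inclusion of `P` into `Hat P`. -/
def toHat {P : Type*} (x : P) : Hat P := ((x : WithTop P) : WithBot (WithTop P))

/-- The rank of a poset: the maximal length (number of covering steps) of a
chain, encoded as the maximal `n` admitting a strictly increasing sequence of
`n + 1` elements. -/
noncomputable def rankN (Q : Type*) [Preorder Q] : ℕ :=
  sSup {n : ℕ | ∃ f : Fin (n + 1) → Q, StrictMono f}

/-- The height of `x` in a poset `Q`: the rank of the subposet `{y | y ≤ x}`. -/
noncomputable def heightN {Q : Type*} [Preorder Q] (x : Q) : ℕ :=
  sSup {n : ℕ | ∃ f : Fin (n + 1) → Q, StrictMono f ∧ ∀ i, f i ≤ x}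

/-- The depth of `x` in a poset `Q`: the rank of the subposet `{y | x ≤ y}`. -/
noncomputable def depthN {Q : Type*} [Preorder Q] (x : Q) : ℕ :=
  sSup {n : ℕ | ∃ f : Fin (n + 1) → Q, StrictMono f ∧ ∀ i, x ≤ f i}

/-- `v` belongs to `S(P)`: `v : Hat P → ℕ` is order-reversing with `v ∞ = 0`. -/
def memS (P : Type*) [PartialOrder P] (v : Hat P → ℕ) : Prop :=
  v ⊤ = 0 ∧ ∀ p q : Hat P, p ≤ q → v q ≤ v p

/-- `v` belongs to `T(P)`: `v : Hat P → ℕ` is strictly order-reversing with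
`v ∞ = 0`. -/
def memT (P : Type*) [PartialOrder P] (v : Hat P → ℕ) : Prop :=
  v ⊤ = 0 ∧ ∀ p q : Hat P, p < q → v q < v p

/-- The partial order of `T(P)`: `v ≥ w` iff `v` dominates `w` pointwise and the
pointwise difference `v - w` is order-reversing. -/
def Tge (P : Type*) [PartialOrder P] (v w : Hat P → ℕ) : Prop :=
  (∀ p : Hat P, w p ≤ v p) ∧ ∀ p q : Hat P, p ≤ q → v q - w q ≤ v p - w p

/-- `v` is a minimal element of the poset `T(P)`. -/
def IsMinT (P : Type*) [PartialOrder P] (v : Hat P → ℕ) : Prop :=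
  memT P v ∧ ∀ w : Hat P → ℕ, memT P w → Tge P v w → w = v

/-- A poset is pure if all its maximal chains have the same length, equivalently
the same cardinality. -/
def IsPure (P : Type*) [PartialOrder P] : Prop :=
  ∀ C D : Set P, IsMaxChain (· ≤ ·) C → IsMaxChain (· ≤ ·) D → C.ncard = D.ncard

/-- The height of `x` inside a chain `C`: the number of elements of `C`
strictly below `x`. -/
noncomputable def heightC {P : Type*} [PartialOrder P] (C : Set P) (x : P) : ℕ :=
  {z ∈ C | z < x}.ncard

/-- A canonical chain decomposition of `P`: a partition of `P` into chains,
each of which is a maximal chain of `P`. -/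
def IsCCD {P : Type*} [PartialOrder P] {d : ℕ} (C : Fin d → Set P) : Prop :=
  (∀ i, IsMaxChain (· ≤ ·) (C i)) ∧
  (∀ i j, i ≠ j → Disjoint (C i) (C j)) ∧
  (⋃ i, C i) = Set.univ

/-- The lattice of lower sets of `P` is regular hyper-planar: `P` admits a
canonical chain decomposition and, for every canonical chain decomposition and
all `x < y` with `x ∈ Cᵢ`, `y ∈ Cⱼ`, one has `height_{Cᵢ}(x) < height_{Cⱼ}(y)`. -/
def RegularHP (P : Type*) [PartialOrder P] : Prop :=
  (∃ (d : ℕ) (C : Fin d → Set P), IsCCD C) ∧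
  ∀ (d : ℕ) (C : Fin d → Set P), IsCCD C →
    ∀ (i j : Fin d) (x y : P), x ∈ C i → y ∈ C j → x < y →
      heightC (C i) x < heightC (C j) y

/-- The lattice of lower sets of `P` is regular planar: `P` admits a canonical
chain decomposition into two chains and the regularity condition holds for all
such decompositions. -/
def RegularPlanar (P : Type*) [PartialOrder P] : Prop :=
  (∃ C : Fin 2 → Set P, IsCCD C) ∧
  ∀ C : Fin 2 → Set P, IsCCD C →
    ∀ (i j : Fin 2) (x y : P), x ∈ C i → y ∈ C j → x < y →
      heightC (C i) x < heightC (C j) y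

section auxbasics
set_option linter.unusedSectionVars false
variable {P : Type*} [PartialOrder P]

lemma toHat_le_toHat {a b : P} : toHat a ≤ toHat b ↔ a ≤ b := by simp [toHat]

lemma toHat_lt_toHat {a b : P} : toHat a < toHat b ↔ a < b := by simp [toHat]

lemma toHat_injective : Function.Injective (toHat (P := P)) := by
  intro a b h; simpa [toHat] using h

lemma toHat_lt_top (a : P) : toHat a < (⊤ : Hat P) := by
  rw [show (⊤ : Hat P) = ((⊤ : WithTop P) : WithBot (WithTop P)) from rfl]
  exact WithBot.coe_lt_coe.mpr (WithTop.coe_lt_top a)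

lemma toHat_ne_top (a : P) : toHat a ≠ (⊤ : Hat P) := (toHat_lt_top a).ne

lemma bot_lt_toHat (a : P) : (⊥ : Hat P) < toHat a := by simp [toHat]

lemma toHat_ne_bot (a : P) : toHat a ≠ (⊥ : Hat P) := by simp [toHat]

lemma hat_bot_ne_top : (⊥ : Hat P) ≠ (⊤ : Hat P) := (WithBot.bot_lt_coe _).ne

lemma hat_cases (p : Hat P) : p = ⊥ ∨ p = ⊤ ∨ ∃ z : P, p = toHat z := by
  induction p using WithBot.recBotCoe with
  | bot => exact Or.inl rfl
  | coe q =>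
    induction q using WithTop.recTopCoe with
    | top => exact Or.inr (Or.inl rfl)
    | coe z => exact Or.inr (Or.inr ⟨z, rfl⟩)

end auxbasics

noncomputable instance hatFintype {P : Type*} [Fintype P] : Fintype (Hat P) :=
  Fintype.ofEquiv (Option (Option P)) (Equiv.refl _)

lemma fin_exists_minimal_wrt {α β : Type*} [PartialOrder β] (f : α → β) (s : Set α)
    (h : s.Finite) (hs : s.Nonempty) : ∃ a ∈ s, ∀ a' ∈ s, f a' ≤ f a → f a = f a' := by
  obtain ⟨a, ha, hmin⟩ := h.exists_minimalFor f s hs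
  exact ⟨a, ha, fun a' ha' hle => le_antisymm (hmin ha' hle) hle⟩

lemma fin_exists_maximal_wrt {α β : Type*} [PartialOrder β] (f : α → β) (s : Set α)
    (h : s.Finite) (hs : s.Nonempty) : ∃ a ∈ s, ∀ a' ∈ s, f a ≤ f a' → f a = f a' := by
  obtain ⟨a, ha, hmax⟩ := h.exists_maximalFor f s hs
  exact ⟨a, ha, fun a' ha' hle => le_antisymm hle (hmax ha' hle)⟩

section auxchains
set_option linter.unusedSectionVars false
variable {Q : Type*} [PartialOrder Q] [Finite Q]

lemma bddAbove_of_strictMono (s : Set ℕ)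
    (h : ∀ n ∈ s, ∃ f : Fin (n + 1) → Q, StrictMono f) : BddAbove s := by
  refine ⟨Nat.card Q, fun n hn => ?_⟩
  obtain ⟨f, hf⟩ := h n hn
  have : Nat.card (Fin (n+1)) ≤ Nat.card Q := Nat.card_le_card_of_injective f hf.injective
  have h2 : n + 1 ≤ Nat.card Q := by simpa using this
  omega

lemma chain_exists_strictMono : ∀ (n : ℕ) (F : Set Q), IsChain (· ≤ ·) F →
    F.ncard = n + 1 → ∃ f : Fin (n + 1) → Q, StrictMono f ∧ ∀ i, f i ∈ F := by
  intro n
  induction n with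
  | zero =>
    intro F _ hcard
    obtain ⟨a, rfl⟩ := Set.ncard_eq_one.mp hcard
    exact ⟨fun _ => a, fun i j hij => absurd hij (by omega), fun _ => rfl⟩
  | succ n ih =>
    intro F hch hcard
    have hfin : F.Finite := Set.toFinite F
    have hne : F.Nonempty := Set.nonempty_of_ncard_ne_zero (by omega)
    obtain ⟨b, hbF, hbmin⟩ := fin_exists_minimal_wrt id F hfin hne
    have hble : ∀ w ∈ F, b ≤ w := by
      intro w hw
      rcases eq_or_ne w b with rfl | hne'
      · exact le_refl _
      · rcases hch hw hbF hne' with h | h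
        · exact (hne' (hbmin w hw h).symm).elim
        · exact h
    have hcard' : (F \ {b}).ncard = n + 1 := by
      rw [Set.ncard_diff_singleton_of_mem hbF]; omega
    obtain ⟨f', hf', hf'mem⟩ := ih (F \ {b}) (hch.mono Set.diff_subset) hcard'
    refine ⟨fun i => if h : i = 0 then b else f' (i.pred h), ?_, ?_⟩
    · intro i j hij
      have hj0 : j ≠ 0 := by
        intro h; subst h; exact absurd hij (by simp [Fin.lt_def])
      by_cases hi0 : i = 0
      · subst hi0
        simp only [dif_pos rfl, dif_neg hj0]
        have hmem := hf'mem (j.pred hj0)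
        exact lt_of_le_of_ne (hble _ hmem.1) (fun h => hmem.2 (Set.mem_singleton_iff.mpr h.symm))
      · simp only [dif_neg hi0, dif_neg hj0]
        apply hf'
        have h1 : (i:ℕ) < j := hij
        have h2 : (i:ℕ) ≠ 0 := fun h => hi0 (Fin.ext h)
        simp only [Fin.lt_def, Fin.coe_pred]
        omega
    · intro i
      by_cases hi0 : i = 0
      · simp [hi0, hbF]
      · simp only [dif_neg hi0]
        exact (hf'mem _).1

lemma chain_ncard_le_rank (F : Set Q) (hch : IsChain (· ≤ ·) F) :
    F.ncard ≤ rankN Q + 1 := by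
  rcases Nat.eq_zero_or_pos F.ncard with h | h
  · omega
  · obtain ⟨n, hn⟩ : ∃ n, F.ncard = n + 1 := ⟨F.ncard - 1, by omega⟩
    obtain ⟨f, hf, _⟩ := chain_exists_strictMono n F hch hn
    have : n ≤ rankN Q := le_csSup
      (bddAbove_of_strictMono _ (fun k hk => by obtain ⟨g, hg⟩ := hk; exact ⟨g, hg⟩)) ⟨f, hf⟩
    omega

lemma le_heightN (x : Q) (F : Set Q) (hch : IsChain (· ≤ ·) F)
    (hsub : ∀ u ∈ F, u ≤ x) : F.ncard ≤ heightN x + 1 := by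
  rcases Nat.eq_zero_or_pos F.ncard with h | h
  · omega
  · obtain ⟨n, hn⟩ : ∃ n, F.ncard = n + 1 := ⟨F.ncard - 1, by omega⟩
    obtain ⟨f, hf, hfm⟩ := chain_exists_strictMono n F hch hn
    have : n ≤ heightN x := le_csSup
      (bddAbove_of_strictMono _ (fun k hk => by obtain ⟨g, hg, _⟩ := hk; exact ⟨g, hg⟩))
      ⟨f, hf, fun i => hsub _ (hfm i)⟩
    omega

lemma le_depthN (x : Q) (F : Set Q) (hch : IsChain (· ≤ ·) F)
    (hsub : ∀ u ∈ F, x ≤ u) : F.ncard ≤ depthN x + 1 := by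
  rcases Nat.eq_zero_or_pos F.ncard with h | h
  · omega
  · obtain ⟨n, hn⟩ : ∃ n, F.ncard = n + 1 := ⟨F.ncard - 1, by omega⟩
    obtain ⟨f, hf, hfm⟩ := chain_exists_strictMono n F hch hn
    have : n ≤ depthN x := le_csSup
      (bddAbove_of_strictMono _ (fun k hk => by obtain ⟨g, hg, _⟩ := hk; exact ⟨g, hg⟩))
      ⟨f, hf, fun i => hsub _ (hfm i)⟩
    omega

lemma rankN_le (k : ℕ) (h : ∀ n, (∃ f : Fin (n+1) → Q, StrictMono f) → n ≤ k) :
    rankN Q ≤ k := by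
  rcases isEmpty_or_nonempty Q with h' | h'
  · have : {n : ℕ | ∃ f : Fin (n + 1) → Q, StrictMono f} = ∅ := by
      ext n; simp only [Set.mem_setOf_eq, Set.mem_empty_iff_false, iff_false]
      rintro ⟨f, -⟩
      exact (h'.false (f 0)).elim
    rw [rankN, this, csSup_empty]
    exact bot_le
  · apply csSup_le
    · exact ⟨0, fun _ => h'.some, fun i j hij => absurd hij (by omega)⟩
    · exact h

end auxchains

/-- Number of elements of `C1` above `y` (inclusive). -/
noncomputable def cntUp {P : Type*} [PartialOrder P] (C1 : Set P) (y : P) : ℕ :=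
  {z ∈ C1 | y ≤ z}.ncard

/-- Number of elements of `C0` below `z` (inclusive). -/
noncomputable def cntDn {P : Type*} [PartialOrder P] (C0 : Set P) (z : P) : ℕ :=
  {w ∈ C0 | w ≤ z}.ncard

lemma cntUp_def {P : Type*} [PartialOrder P] (C1 : Set P) (y : P) :
    cntUp C1 y = {z ∈ C1 | y ≤ z}.ncard := rfl

lemma cntDn_def {P : Type*} [PartialOrder P] (C0 : Set P) (z : P) :
    cntDn C0 z = {w ∈ C0 | w ≤ z}.ncard := rfl

/-- Walking up a finite chain in `P`, a strictly order-reversing map drops by at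
least the number of steps. -/
lemma walk_drop {P : Type*} [Fintype P] [PartialOrder P] (v : Hat P → ℕ)
    (hsv : ∀ p q : Hat P, p < q → v q < v p) :
    ∀ (n : ℕ) (F : Set P), IsChain (· ≤ ·) F → ∀ a ∈ F, ∀ q : Hat P,
      (∀ w ∈ F, toHat w < q) → {w ∈ F | a ≤ w}.ncard = n + 1 →
      v q + (n + 1) ≤ v (toHat a) := by
  intro n
  induction n with
  | zero =>
    intro F _ a ha q hq _
    have := hsv (toHat a) q (hq a ha)
    omega
  | succ n ih =>
    intro F hch a ha q hq hcard
    obtain ⟨b, hbmem, hbne⟩ := Set.exists_ne_of_one_lt_ncard (by omega : 1 < {w ∈ F | a ≤ w}.ncard) a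
    have hab : a < b := lt_of_le_of_ne hbmem.2 (Ne.symm hbne)
    have hWne : ({w ∈ F | a < w} : Set P).Nonempty := ⟨b, hbmem.1, hab⟩
    obtain ⟨b0, hb0mem, hb0min⟩ :=
      fin_exists_minimal_wrt id {w ∈ F | a < w} (Set.toFinite _) hWne
    have hb0F : b0 ∈ F := hb0mem.1
    have hab0 : a < b0 := hb0mem.2
    have hb0le : ∀ w ∈ F, a < w → b0 ≤ w := by
      intro w hw haw
      rcases eq_or_ne w b0 with rfl | hne'
      · exact le_refl _
      · rcases hch hw hb0F hne' with h | h
        · exact (hne' (hb0min w ⟨hw, haw⟩ h).symm).elim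
        · exact h
    have hseteq : {w ∈ F | b0 ≤ w} = {w ∈ F | a ≤ w} \ {a} := by
      ext w
      simp only [Set.mem_setOf_eq, Set.mem_diff, Set.mem_singleton_iff]
      constructor
      · rintro ⟨hw, hbw⟩
        exact ⟨⟨hw, le_of_lt (lt_of_lt_of_le hab0 hbw)⟩,
          fun h => absurd (lt_of_lt_of_le hab0 hbw) (by rw [h]; exact lt_irrefl _)⟩
      · rintro ⟨⟨hw, haw⟩, hwa⟩
        exact ⟨hw, hb0le w hw (lt_of_le_of_ne haw (Ne.symm hwa))⟩
    have hcard' : {w ∈ F | b0 ≤ w}.ncard = n + 1 := by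
      have hamem : a ∈ {w ∈ F | a ≤ w} := ⟨ha, le_refl a⟩
      rw [hseteq, Set.ncard_diff_singleton_of_mem hamem, hcard]
      omega
    have h1 := ih F hch b0 hb0F q hq hcard'
    have h2 := hsv (toHat a) (toHat b0) (toHat_lt_toHat.mpr hab0)
    omega

/-- Let `I(P)` be a regular planar lattice with canonical chain decomposition
`P = C₁ ∪ C₂` into two chains, where `ℓ(C₁) = rank P`. If
`height(x) + depth(y) ≤ rank (Hat P) + 1` for all `x` covering `y` in `P`, then
every minimal element `v` of `T(P)` satisfies `v(max C₁) = 1`. -/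
theorem min_memT_value_at_top_of_first_chain (P : Type*) [Fintype P]
    [PartialOrder P] (hreg : RegularPlanar P) (C : Fin 2 → Set P) (hC : IsCCD C)
    (hlen : (C 0).ncard - 1 = rankN P)
    (hcond : ∀ x y : P, y ⋖ x →
      heightN (toHat x) + depthN (toHat y) ≤ rankN (Hat P) + 1)
    (m : P) (hm : m ∈ C 0) (hmax : ∀ z ∈ C 0, z ≤ m) :
    ∀ v : Hat P → ℕ, IsMinT P v → v (toHat m) = 1 := by
  intro v hv
  have hvtop : v ⊤ = 0 := hv.1.1
  have hstrict : ∀ p q : Hat P, p < q → v q < v p := hv.1.2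
  -- basic structure
  set k := (C 0).ncard with hk_def
  set l := (C 1).ncard with hl_def
  have hch0 : IsChain (· ≤ ·) (C 0) := (hC.1 0).1
  have hch1 : IsChain (· ≤ ·) (C 1) := (hC.1 1).1
  have hPmem : ∀ z : P, z ∈ C 0 ∨ z ∈ C 1 := by
    intro z
    have : z ∈ ⋃ i, C i := by rw [hC.2.2]; trivial
    obtain ⟨i, hi⟩ := Set.mem_iUnion.mp this
    fin_cases i
    · exact Or.inl hi
    · exact Or.inr hi
  have hdisj : ∀ z : P, z ∈ C 0 → z ∈ C 1 → False := by
    intro z h0 h1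
    exact Set.disjoint_left.mp (hC.2.1 0 1 (by decide)) h0 h1
  have hk1 : 1 ≤ k := by
    rw [hk_def]
    exact (Set.ncard_pos (Set.toFinite _)).mpr ⟨m, hm⟩
  have hrankP : rankN P = k - 1 := hlen.symm
  have hlk : l ≤ k := by
    have := chain_ncard_le_rank (C 1) hch1
    rw [hrankP] at this
    omega
  -- m is maximal in P
  have hmmax : ∀ z : P, ¬ m < z := by
    intro z hz
    rcases hPmem z with h0 | h1
    · exact absurd (lt_of_lt_of_le hz (hmax z h0)) (lt_irrefl m)
    · have hzn : z ∉ C 0 := fun h => hdisj z h h1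
      have hchain' : IsChain (· ≤ ·) (insert z (C 0)) := by
        apply hch0.insert
        intro b hb _
        exact Or.inr (le_of_lt (lt_of_le_of_lt (hmax b hb) hz))
      have := (hC.1 0).2 hchain' (Set.subset_insert _ _)
      exact hzn (this ▸ Set.mem_insert z (C 0))
  -- rank of Hat P
  have hrankHat : rankN (Hat P) ≤ k + 1 := by
    apply rankN_le
    intro n hf
    obtain ⟨f, hf⟩ := hf
    set T' : Set P := {z : P | toHat z ∈ Set.range f} with hT'_def
    have hT'chain : IsChain (· ≤ ·) T' := by
      intro z hz z' hz' hne
      obtain ⟨i, hi⟩ := hz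
      obtain ⟨j, hj⟩ := hz'
      rcases le_total i j with h | h
      · exact Or.inl (toHat_le_toHat.mp (hi ▸ hj ▸ hf.monotone h))
      · exact Or.inr (toHat_le_toHat.mp (hj ▸ hi ▸ hf.monotone h))
    have hsub : Set.range f ⊆ (toHat '' T') ∪ {(⊥ : Hat P), (⊤ : Hat P)} := by
      rintro u ⟨i, rfl⟩
      rcases hat_cases (f i) with h | h | ⟨z, h⟩
      · exact Or.inr (by simp [h])
      · exact Or.inr (by simp [h])
      · exact Or.inl ⟨z, ⟨i, h⟩, h.symm⟩
    have hcard1 : (Set.range f).ncard = n + 1 := by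
      rw [← Set.image_univ, Set.ncard_image_of_injective _ hf.injective]
      simp [Set.ncard_univ]
    have hcard2 : ((toHat '' T') ∪ {(⊥ : Hat P), (⊤ : Hat P)}).ncard ≤ T'.ncard + 2 := by
      apply le_trans (Set.ncard_union_le _ _)
      have h1 : (toHat '' T').ncard = T'.ncard := Set.ncard_image_of_injective _ toHat_injective
      have h2 : ({(⊥ : Hat P), (⊤ : Hat P)} : Set (Hat P)).ncard ≤ 2 := by
        apply le_trans (Set.ncard_insert_le _ _)
        simp
      omega
    have hT'card : T'.ncard ≤ k := by
      have := chain_ncard_le_rank T' hT'chain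
      rw [hrankP] at this
      omega
    have := Set.ncard_le_ncard hsub (Set.toFinite _)
    omega
  -- positivity of v off the top
  have hvpos : ∀ p : Hat P, p ≠ ⊤ → 1 ≤ v p := by
    intro p hp
    have : p < ⊤ := lt_top_iff_ne_top.mpr hp
    have := hstrict p ⊤ this
    omega
  have hvm1 : 1 ≤ v (toHat m) := hvpos _ (toHat_ne_top m)
  -- main contradiction argument: assume v (toHat m) ≥ 2
  by_contra hne1
  have hge2 : 2 ≤ v (toHat m) := by omega
  -- counting functions
  let up : P → ℕ := cntUp (C 1)
  let dn : P → ℕ := cntDn (C 0)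
  have hup_eq : ∀ y, up y = {z ∈ C 1 | y ≤ z}.ncard := fun _ => rfl
  have hdn_eq : ∀ z, dn z = {w ∈ C 0 | w ≤ z}.ncard := fun _ => rfl
  have hup_pos : ∀ y ∈ C 1, 1 ≤ up y := by
    intro y hy
    rw [hup_eq]
    exact (Set.ncard_pos (Set.toFinite _)).mpr ⟨y, hy, le_refl y⟩
  have hup_le_l : ∀ y : P, up y ≤ l := by
    intro y
    rw [hup_eq, hl_def]
    exact Set.ncard_le_ncard (fun z hz => hz.1) (Set.toFinite _)
  have hdn_le_k : ∀ z : P, dn z ≤ k := by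
    intro z
    rw [hdn_eq, hk_def]
    exact Set.ncard_le_ncard (fun w hw => hw.1) (Set.toFinite _)
  have hdn_pos : ∀ z ∈ C 0, 1 ≤ dn z := by
    intro z hz
    rw [hdn_eq]
    exact (Set.ncard_pos (Set.toFinite _)).mpr ⟨z, hz, le_refl z⟩
  have hdn_m : dn m = k := by
    have hset : {w ∈ C 0 | w ≤ m} = C 0 := by
      ext w
      exact ⟨fun h => h.1, fun h => ⟨h, hmax w h⟩⟩
    rw [hdn_eq, hset, hk_def]
  have hup_anti : ∀ y y' : P, y ≤ y' → up y' ≤ up y := by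
    intro y y' h
    rw [hup_eq, hup_eq]
    exact Set.ncard_le_ncard (fun z hz => ⟨hz.1, le_trans h hz.2⟩) (Set.toFinite _)
  have hup_strict : ∀ y ∈ C 1, ∀ y' ∈ C 1, y < y' → up y' + 1 ≤ up y := by
    intro y hy y' hy' hlt
    have hnotin : y ∉ {z ∈ C 1 | y' ≤ z} := by
      rintro ⟨-, h⟩
      exact absurd (lt_of_lt_of_le hlt h) (lt_irrefl y)
    have hsub : insert y {z ∈ C 1 | y' ≤ z} ⊆ {z ∈ C 1 | y ≤ z} := by
      rintro z (rfl | ⟨hz1, hz2⟩)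
      · exact ⟨hy, le_refl z⟩
      · exact ⟨hz1, le_trans (le_of_lt hlt) hz2⟩
    have := Set.ncard_le_ncard hsub (Set.toFinite _)
    rw [Set.ncard_insert_of_notMem hnotin (Set.toFinite _)] at this
    rw [hup_eq, hup_eq]
    omega
  -- dropping along C 0 towards m
  have hvdrop0 : ∀ z ∈ C 0, v (toHat m) + k ≤ v (toHat z) + dn z := by
    intro z hz
    rcases eq_or_ne z m with rfl | hzm
    · rw [hdn_m]
    · have hzltm : z < m := lt_of_le_of_ne (hmax z hz) hzm
      set F : Set P := {w ∈ C 0 | z ≤ w ∧ w ≠ m} with hF_def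
      have hzF : z ∈ F := ⟨hz, le_refl z, hzm⟩
      have hchF : IsChain (· ≤ ·) F := hch0.mono (fun w hw => hw.1)
      have hqF : ∀ w ∈ F, toHat w < toHat m := by
        rintro w ⟨hw, -, hwm⟩
        exact toHat_lt_toHat.mpr (lt_of_le_of_ne (hmax w hw) hwm)
      have hself : {w ∈ F | z ≤ w} = F := by
        ext w
        exact ⟨fun h => h.1, fun h => ⟨h, h.2.1⟩⟩
      -- cardinality of F
      have hcount : F.ncard + dn z = k := by
        rw [hdn_eq, hk_def]
        have hA : ({w ∈ C 0 | z ≤ w} : Set P).ncard + {w ∈ C 0 | w ≤ z}.ncard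
            = (C 0).ncard + 1 := by
          have huni : ({w ∈ C 0 | z ≤ w} : Set P) ∪ {w ∈ C 0 | w ≤ z} = C 0 := by
            ext w
            constructor
            · rintro (h | h) <;> exact h.1
            · intro hw
              rcases eq_or_ne w z with rfl | hne'
              · exact Or.inl ⟨hw, le_refl w⟩
              · rcases hch0 hw hz hne' with h | h
                · exact Or.inr ⟨hw, h⟩
                · exact Or.inl ⟨hw, h⟩
          have hint : ({w ∈ C 0 | z ≤ w} : Set P) ∩ {w ∈ C 0 | w ≤ z} = {z} := by
            ext w
            constructor
            · rintro ⟨⟨-, h1⟩, ⟨-, h2⟩⟩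
              exact le_antisymm h2 h1
            · rintro rfl
              exact ⟨⟨hz, le_refl w⟩, ⟨hz, le_refl w⟩⟩
          have := Set.ncard_union_add_ncard_inter {w ∈ C 0 | z ≤ w} {w ∈ C 0 | w ≤ z}
            (Set.toFinite _) (Set.toFinite _)
          rw [huni, hint, Set.ncard_singleton] at this
          omega
        have hFA : F = {w ∈ C 0 | z ≤ w} \ {m} := by
          ext w
          simp only [hF_def, Set.mem_setOf_eq, Set.mem_diff, Set.mem_singleton_iff]
          tauto
        have hmA : m ∈ ({w ∈ C 0 | z ≤ w} : Set P) := ⟨hm, le_of_lt hzltm⟩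
        have h5 : 1 ≤ ({w ∈ C 0 | z ≤ w} : Set P).ncard :=
          (Set.ncard_pos (Set.toFinite _)).mpr ⟨m, hmA⟩
        have h6 : (({w ∈ C 0 | z ≤ w} : Set P) \ {m}).ncard
            = ({w ∈ C 0 | z ≤ w} : Set P).ncard - 1 :=
          Set.ncard_diff_singleton_of_mem hmA
        rw [hFA, h6]
        omega
      have hFpos : 1 ≤ F.ncard := (Set.ncard_pos (Set.toFinite _)).mpr ⟨z, hzF⟩
      obtain ⟨n, hn⟩ : ∃ n, F.ncard = n + 1 := ⟨F.ncard - 1, by omega⟩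
      have := walk_drop v hstrict n F hchF z hzF (toHat m) hqF (by rw [hself]; exact hn)
      omega
  -- v at ⊥
  have hvbot : v (toHat m) + k ≤ v ⊥ := by
    obtain ⟨z0, hz0C, hz0min⟩ :=
      fin_exists_minimal_wrt id (C 0) (Set.toFinite _) ⟨m, hm⟩
    have hdnz0 : dn z0 = 1 := by
      rw [hdn_eq]
      have : {w ∈ C 0 | w ≤ z0} = {z0} := by
        ext w
        constructor
        · rintro ⟨hw, hwle⟩
          exact hz0min w hw hwle |>.symm
        · rintro rfl
          exact ⟨hz0C, le_refl w⟩
      rw [this, Set.ncard_singleton]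
    have h1 := hvdrop0 z0 hz0C
    have h2 := hstrict ⊥ (toHat z0) (bot_lt_toHat z0)
    omega
  -- lower bound for v on C 1
  have hvup : ∀ y ∈ C 1, up y ≤ v (toHat y) := by
    intro y hy
    set F : Set P := {z ∈ C 1 | y ≤ z} with hF_def
    have hchF : IsChain (· ≤ ·) F := hch1.mono (fun w hw => hw.1)
    have hyF : y ∈ F := ⟨hy, le_refl y⟩
    have hqF : ∀ w ∈ F, toHat w < (⊤ : Hat P) := fun w _ => toHat_lt_top w
    have hself : {w ∈ F | y ≤ w} = F := by
      ext w
      exact ⟨fun h => h.1, fun h => ⟨h, h.2⟩⟩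
    have hFpos : 1 ≤ F.ncard := (Set.ncard_pos (Set.toFinite _)).mpr ⟨y, hyF⟩
    have hupF : up y = F.ncard := hup_eq y
    obtain ⟨n, hn⟩ : ∃ n, F.ncard = n + 1 := ⟨F.ncard - 1, by omega⟩
    have := walk_drop v hstrict n F hchF y hyF ⊤ hqF (by rw [hself]; exact hn)
    rw [hvtop] at this
    omega
  -- dropping along C 1
  have hvdrop1 : ∀ y ∈ C 1, ∀ r ∈ C 1, y ≤ r →
      v (toHat r) + up y ≤ v (toHat y) + up r := by
    intro y hy r hr hyr
    rcases eq_or_ne y r with rfl | hne'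
    · omega
    have hylr : y < r := lt_of_le_of_ne hyr hne'
    set F : Set P := {w ∈ C 1 | y ≤ w ∧ ¬ r ≤ w} with hF_def
    have hchF : IsChain (· ≤ ·) F := hch1.mono (fun w hw => hw.1)
    have hyF : y ∈ F := ⟨hy, le_refl y, fun h => absurd (lt_of_lt_of_le hylr h) (lt_irrefl y)⟩
    have hqF : ∀ w ∈ F, toHat w < toHat r := by
      rintro w ⟨hw, -, hwr⟩
      apply toHat_lt_toHat.mpr
      rcases eq_or_ne w r with rfl | hne''
      · exact absurd (le_refl w) hwr
      · rcases hch1 hw hr hne'' with h | h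
        · exact lt_of_le_of_ne h hne''
        · exact absurd h hwr
    have hself : {w ∈ F | y ≤ w} = F := by
      ext w
      exact ⟨fun h => h.1, fun h => ⟨h, h.2.1⟩⟩
    have hcount : F.ncard + up r = up y := by
      have hFA : F = {w ∈ C 1 | y ≤ w} \ {w ∈ C 1 | r ≤ w} := by
        ext w
        simp only [hF_def, Set.mem_setOf_eq, Set.mem_diff]
        tauto
      have hsub' : ({w ∈ C 1 | r ≤ w} : Set P) ⊆ {w ∈ C 1 | y ≤ w} :=
        fun w hw => ⟨hw.1, le_trans hyr hw.2⟩
      rw [hFA, hup_eq, hup_eq]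
      have := Set.ncard_diff_add_ncard_of_subset hsub' (Set.toFinite _)
      omega
    have hFpos : 1 ≤ F.ncard := (Set.ncard_pos (Set.toFinite _)).mpr ⟨y, hyF⟩
    obtain ⟨n, hn⟩ : ∃ n, F.ncard = n + 1 := ⟨F.ncard - 1, by omega⟩
    have := walk_drop v hstrict n F hchF y hyF (toHat r) hqF (by rw [hself]; exact hn)
    omega
  -- the danger lemma: elements of C 1 below m
  have hdanger : ∀ z ∈ C 1, z ≤ m → up z + 1 ≤ v (toHat z) := by
    intro z hz hzm
    set W : Set P := {w ∈ C 1 | w ≤ m} with hW_def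
    obtain ⟨yt, hytW, hytmax⟩ :=
      fin_exists_maximal_wrt id W (Set.toFinite _) ⟨z, hz, hzm⟩
    have hytC1 : yt ∈ C 1 := hytW.1
    have hytm : yt ≤ m := hytW.2
    have hytub : ∀ w ∈ W, w ≤ yt := by
      intro w hw
      rcases eq_or_ne w yt with rfl | hne'
      · exact le_refl _
      · rcases hch1 hw.1 hytC1 hne' with h | h
        · exact h
        · exact le_of_eq (hytmax w hw h).symm
    have hytltm : yt < m :=
      lt_of_le_of_ne hytm (fun h => hdisj m hm (h ▸ hytC1))
    -- minimal element of C 0 above yt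
    set X : Set P := {x ∈ C 0 | yt < x} with hX_def
    obtain ⟨x0, hx0X, hx0min⟩ :=
      fin_exists_minimal_wrt id X (Set.toFinite _) ⟨m, hm, hytltm⟩
    have hx0C0 : x0 ∈ C 0 := hx0X.1
    have hytx0 : yt < x0 := hx0X.2
    have hx0lb : ∀ x ∈ X, x0 ≤ x := by
      intro x hx
      rcases eq_or_ne x x0 with rfl | hne'
      · exact le_refl _
      · rcases hch0 hx.1 hx0C0 hne' with h | h
        · exact (hne' (hx0min x hx h).symm).elim
        · exact h
    -- yt ⋖ x0
    have hcov : yt ⋖ x0 := by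
      constructor
      · exact hytx0
      · intro u hu1 hu2
        rcases hPmem u with h0 | h1
        · exact absurd hu2 (not_lt_of_ge (hx0lb u ⟨h0, hu1⟩))
        · have hum : u ≤ m := le_trans (le_of_lt hu2) (hmax x0 hx0C0)
          exact absurd hu1 (not_lt_of_ge (hytub u ⟨h1, hum⟩))
    have hhd := hcond x0 yt hcov
    -- height lower bound
    have hheight : dn x0 ≤ heightN (toHat x0) := by
      set F : Set (Hat P) := insert ⊥ (toHat '' {w ∈ C 0 | w ≤ x0}) with hF_def
      have hchF : IsChain (· ≤ ·) F := by
        rintro u hu u' hu' hne'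
        rcases hu with rfl | ⟨w, hw, rfl⟩
        · exact Or.inl bot_le
        · rcases hu' with rfl | ⟨w', hw', rfl⟩
          · exact Or.inr bot_le
          · rcases eq_or_ne w w' with rfl | hne''
            · exact (hne' rfl).elim
            · rcases hch0 hw.1 hw'.1 hne'' with h | h
              · exact Or.inl (toHat_le_toHat.mpr h)
              · exact Or.inr (toHat_le_toHat.mpr h)
      have hsub : ∀ u ∈ F, u ≤ toHat x0 := by
        rintro u (rfl | ⟨w, hw, rfl⟩)
        · exact bot_le
        · exact toHat_le_toHat.mpr hw.2
      have hcardF : F.ncard = dn x0 + 1 := by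
        have hnb : (⊥ : Hat P) ∉ toHat '' {w ∈ C 0 | w ≤ x0} := by
          rintro ⟨w, -, hw⟩
          exact toHat_ne_bot w hw
        rw [hF_def, Set.ncard_insert_of_notMem hnb (Set.toFinite _),
          Set.ncard_image_of_injective _ toHat_injective, hdn_eq]
      have := le_heightN (toHat x0) F hchF hsub
      omega
    -- depth lower bound
    have hdepth : up yt ≤ depthN (toHat yt) := by
      set F : Set (Hat P) := insert ⊤ (toHat '' {w ∈ C 1 | yt ≤ w}) with hF_def
      have hchF : IsChain (· ≤ ·) F := by
        rintro u hu u' hu' hne'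
        rcases hu with rfl | ⟨w, hw, rfl⟩
        · exact Or.inr le_top
        · rcases hu' with rfl | ⟨w', hw', rfl⟩
          · exact Or.inl le_top
          · rcases eq_or_ne w w' with rfl | hne''
            · exact (hne' rfl).elim
            · rcases hch1 hw.1 hw'.1 hne'' with h | h
              · exact Or.inl (toHat_le_toHat.mpr h)
              · exact Or.inr (toHat_le_toHat.mpr h)
      have hsub : ∀ u ∈ F, toHat yt ≤ u := by
        rintro u (rfl | ⟨w, hw, rfl⟩)
        · exact le_top
        · exact toHat_le_toHat.mpr hw.2
      have hcardF : F.ncard = up yt + 1 := by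
        have hnt : (⊤ : Hat P) ∉ toHat '' {w ∈ C 1 | yt ≤ w} := by
          rintro ⟨w, -, hw⟩
          exact toHat_ne_top w hw
        rw [hF_def, Set.ncard_insert_of_notMem hnt (Set.toFinite _),
          Set.ncard_image_of_injective _ toHat_injective, hup_eq]
      have := le_depthN (toHat yt) F hchF hsub
      omega
    -- conclude for yt
    have hytbound : up yt + 1 ≤ v (toHat yt) := by
      have h1 := hvdrop0 x0 hx0C0
      have h2 := hstrict (toHat yt) (toHat x0) (toHat_lt_toHat.mpr hytx0)
      have h3 : dn x0 + up yt ≤ k + 2 := by omega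
      omega
    -- descend to z
    have h4 := hvdrop1 z hz yt hytC1 (hytub z ⟨hz, hzm⟩)
    have h5 := hup_anti z yt (hytub z ⟨hz, hzm⟩)
    omega
  -- the up-set S and the witness w
  set S : Set (Hat P) :=
    {u | u = ⊤ ∨ ∃ y, y ∈ C 1 ∧ u = toHat y ∧ ¬ y ≤ m ∧ v (toHat y) = up y} with hS_def
  have htopS : (⊤ : Hat P) ∈ S := Or.inl rfl
  have hbotS : (⊥ : Hat P) ∉ S := by
    rintro (h | ⟨y, -, h, -⟩)
    · exact hat_bot_ne_top h
    · exact toHat_ne_bot y h.symm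
  have hS_up : ∀ p ∈ S, ∀ q : Hat P, p ≤ q → q ∈ S := by
    rintro p (rfl | ⟨y, hy, rfl, hym, hvy⟩) q hpq
    · exact Or.inl (le_antisymm le_top hpq)
    · rcases hat_cases q with rfl | rfl | ⟨r, rfl⟩
      · exact absurd (le_antisymm hpq bot_le) (toHat_ne_bot y)
      · exact Or.inl rfl
      · have hyr : y ≤ r := toHat_le_toHat.mp hpq
        have hrC1 : r ∈ C 1 := by
          rcases hPmem r with h0 | h1
          · exact absurd (le_trans hyr (hmax r h0)) hym
          · exact h1
        have hrm : ¬ r ≤ m := fun h => hym (le_trans hyr h)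
        have hvr : v (toHat r) = up r := by
          have h1 := hvdrop1 y hy r hrC1 hyr
          have h2 := hvup r hrC1
          omega
        exact Or.inr ⟨r, hrC1, rfl, hrm, hvr⟩
  -- value of v on S
  have hvS : ∀ q ∈ S, q = ⊤ ∨ ∃ y, y ∈ C 1 ∧ q = toHat y ∧ v q = up y ∧ ¬ y ≤ m := by
    rintro q (rfl | ⟨y, hy, rfl, hym, hvy⟩)
    · exact Or.inl rfl
    · exact Or.inr ⟨y, hy, rfl, hvy, hym⟩
  -- the boundary bound
  have hbound : ∀ p : Hat P, p ∉ S → ∀ q ∈ S, p < q → v q + 2 ≤ v p := by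
    intro p hpS q hqS hpq
    -- first: a lower bound for v p in all cases
    rcases hvS q hqS with rfl | ⟨y', hy', rfl, hvq, hy'm⟩
    · -- q = ⊤, need 2 ≤ v p
      rw [hvtop]
      rcases hat_cases p with rfl | rfl | ⟨z, rfl⟩
      · omega
      · exact absurd htopS hpS
      · rcases hPmem z with h0 | h1
        · have h1 := hvdrop0 z h0
          have h2 := hdn_le_k z
          omega
        · by_cases hzm : z ≤ m
          · have hzltm : z < m := lt_of_le_of_ne hzm (fun h => hdisj m hm (h ▸ h1))
            have := hstrict (toHat z) (toHat m) (toHat_lt_toHat.mpr hzltm)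
            omega
          · have hvz : v (toHat z) ≠ up z := by
              intro h
              exact hpS (Or.inr ⟨z, h1, rfl, hzm, h⟩)
            have h2 := hvup z h1
            have h3 := hup_pos z h1
            omega
    · -- q = toHat y'
      rw [hvq]
      rcases hat_cases p with rfl | rfl | ⟨z, rfl⟩
      · have h1 := hup_le_l y'
        omega
      · exact absurd hpq (not_top_lt)
      · have hzy' : z < y' := toHat_lt_toHat.mp hpq
        rcases hPmem z with h0 | h1
        · -- z ∈ C 0: use regularity
          have hregzy := hreg.2 C hC 0 1 z y' h0 hy' hzy'
          have hh0 : heightC (C 0) z + 1 = dn z := by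
            show ({w ∈ C 0 | w < z} : Set P).ncard + 1 = dn z
            rw [hdn_eq]
            have : ({w ∈ C 0 | w ≤ z} : Set P) = insert z {w ∈ C 0 | w < z} := by
              ext w
              simp only [Set.mem_setOf_eq, Set.mem_insert_iff]
              constructor
              · rintro ⟨hw, hwle⟩
                rcases eq_or_ne w z with rfl | hne'
                · exact Or.inl rfl
                · exact Or.inr ⟨hw, lt_of_le_of_ne hwle hne'⟩
              · rintro (rfl | ⟨hw, hwlt⟩)
                · exact ⟨h0, le_refl w⟩
                · exact ⟨hw, le_of_lt hwlt⟩
            rw [this, Set.ncard_insert_of_notMem (by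
              rintro ⟨-, hlt⟩
              exact lt_irrefl z hlt) (Set.toFinite _)]
          have hh1 : heightC (C 1) y' + up y' = l := by
            show ({z ∈ C 1 | z < y'} : Set P).ncard + up y' = l
            have huni : ({z ∈ C 1 | z < y'} : Set P) ∪ {z ∈ C 1 | y' ≤ z} = C 1 := by
              ext w
              constructor
              · rintro (h | h) <;> exact h.1
              · intro hw
                rcases eq_or_ne w y' with rfl | hne'
                · exact Or.inr ⟨hw, le_refl w⟩
                · rcases hch1 hw hy' hne' with h | h
                  · exact Or.inl ⟨hw, lt_of_le_of_ne h hne'⟩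
                  · exact Or.inr ⟨hw, h⟩
            have hdisj' : Disjoint ({z ∈ C 1 | z < y'} : Set P) {z ∈ C 1 | y' ≤ z} := by
              rw [Set.disjoint_left]
              rintro w ⟨-, h1'⟩ ⟨-, h2'⟩
              exact absurd (lt_of_lt_of_le h1' h2') (lt_irrefl w)
            have hcup := Set.ncard_union_eq hdisj' (Set.toFinite _) (Set.toFinite _)
            rw [huni] at hcup
            rw [hup_eq, hl_def]
            omega
          have h1 := hvdrop0 z h0
          omega
        · -- z ∈ C 1
          by_cases hzm : z ≤ m
          · have hd := hdanger z h1 hzm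
            have h2 := hup_strict z h1 y' hy' hzy'
            omega
          · have hvz : v (toHat z) ≠ up z := by
              intro h
              exact hpS (Or.inr ⟨z, h1, rfl, hzm, h⟩)
            have h2 := hvup z h1
            have h3 := hup_strict z h1 y' hy' hzy'
            omega
  -- define the competitor w
  set w : Hat P → ℕ := fun p => if p ∈ S then v p else v p - 1 with hw_def
  have hwT : memT P w := by
    constructor
    · simp [hw_def, htopS, hvtop]
    · intro p q hpq
      by_cases hpS : p ∈ S
      · have hqS : q ∈ S := hS_up p hpS q (le_of_lt hpq)
        simp only [hw_def, if_pos hpS, if_pos hqS]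
        exact hstrict p q hpq
      · by_cases hqS : q ∈ S
        · simp only [hw_def, if_neg hpS, if_pos hqS]
          have := hbound p hpS q hqS hpq
          omega
        · simp only [hw_def, if_neg hpS, if_neg hqS]
          have h1 := hstrict p q hpq
          have h2 : 1 ≤ v q := hvpos q (fun h => hqS (h ▸ htopS))
          omega
  have hTge : Tge P v w := by
    constructor
    · intro p
      by_cases hpS : p ∈ S
      · simp [hw_def, hpS]
      · simp only [hw_def, if_neg hpS]
        omega
    · intro p q hpq
      by_cases hqS : q ∈ S
      · simp [hw_def, hqS]
      · have hpS : p ∉ S := fun h => hqS (hS_up p h q hpq)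
        have h1 : 1 ≤ v p := hvpos p (fun h => hpS (h ▸ htopS))
        have h2 : 1 ≤ v q := hvpos q (fun h => hqS (h ▸ htopS))
        simp only [hw_def, if_neg hpS, if_neg hqS]
        omega
  have hwv : w = v := hv.2 w hwT hTge
  have : w ⊥ = v ⊥ := by rw [hwv]
  have hvbotpos : 1 ≤ v ⊥ := hvpos ⊥ hat_bot_ne_top
  simp only [hw_def, if_neg hbotS] at this
  omega
end

section
/- Let K be a field, P a finite poset, and L = I(P) the distributive lattice of lower sets of P. Let \varphi be the K-algebra homomorphism from the polynomial ring K[x_\alpha : \alpha \in L] to the polynomial ring K[t, y_p : p \in P] defined by \varphi(x_\alpha) = t \prod_{p \in \alpha} y_p. Then the kernel of \varphi equals the ideal generated by the Hibi binomials x_\alpha x_\beta - x_{\alpha \cap \beta} x_{\alpha \cup \beta}, where \alpha, \beta range over incomparable pairs of elements of L. -/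
open Classical

open MvPolynomial in
/-- The monomial `t ∏_{p ∈ α} y_p` attached to a lower set `α` of `P`, inside the
polynomial ring `K[t, y_p : p ∈ P]` (the variable `none` plays the role of `t`). -/
noncomputable def hibiMonomial (K : Type*) [CommSemiring K] (P : Type*) [Fintype P]
    [PartialOrder P] (α : LowerSet P) : MvPolynomial (Option P) K :=
  X none * ∏ p : P, if p ∈ α then X (some p) else 1


namespace HibiProof
open MvPolynomial Finsupp

variable {K : Type*} [Field K] {P : Type*} [Fintype P] [PartialOrder P]

noncomputable def fil (α : LowerSet P) : Finset P := Finset.univ.filter (fun p => p ∈ α)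

noncomputable def mA (α : LowerSet P) : Option P →₀ ℕ :=
  Finsupp.single none 1 + ∑ p ∈ fil α, Finsupp.single (some p) 1

lemma mA_none (α : LowerSet P) : mA α none = 1 := by
  simp [mA, Finsupp.finset_sum_apply, Finsupp.single_apply]

lemma mA_some (α : LowerSet P) (p : P) : mA α (some p) = if p ∈ α then 1 else 0 := by
  classical
  simp only [mA, Finsupp.add_apply, Finsupp.single_apply, Finsupp.finset_sum_apply,
    Option.some.injEq]
  rw [Finset.sum_ite_eq' (fil α) p (fun _ => 1)]
  simp [fil]

omit [Fintype P] [PartialOrder P] in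
lemma prod_monomial_one {ι : Type*} (s : Finset ι) (f : ι → (Option P →₀ ℕ)) :
    (∏ i ∈ s, monomial (f i) (1 : K)) = monomial (∑ i ∈ s, f i) 1 := by
  classical
  induction s using Finset.induction with
  | empty => simp
  | insert a s h ih => simp [Finset.prod_insert h, Finset.sum_insert h, ih, monomial_mul]

lemma hibiMonomial_eq (α : LowerSet P) :
    hibiMonomial K P α = monomial (mA α) 1 := by
  classical
  rw [hibiMonomial, ← Finset.prod_filter]
  have : ∀ p : P, (X (some p) : MvPolynomial (Option P) K) = monomial (Finsupp.single (some p) 1) 1 := by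
    intro p; rw [← X_pow_eq_monomial, pow_one]
  rw [Finset.prod_congr rfl (fun p _ => this p), prod_monomial_one]
  rw [show (X none : MvPolynomial (Option P) K) = monomial (Finsupp.single none 1) 1 by
    rw [← X_pow_eq_monomial, pow_one]]
  rw [monomial_mul, one_mul, mA, fil]

noncomputable def img (d : LowerSet P →₀ ℕ) : Option P →₀ ℕ :=
  d.sum fun α k => k • mA α

lemma img_add (d e : LowerSet P →₀ ℕ) : img (d + e) = img d + img e := by
  unfold img
  apply Finsupp.sum_add_index' (fun α => by simp) (fun α k l => add_smul k l (mA α))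

lemma img_single (α : LowerSet P) (k : ℕ) : img (Finsupp.single α k) = k • mA α := by
  unfold img
  rw [Finsupp.sum_single_index]; simp

lemma aeval_monomial' (d : LowerSet P →₀ ℕ) (c : K) :
    aeval (hibiMonomial K P) (monomial d c) = monomial (img d) c := by
  classical
  rw [MvPolynomial.aeval_monomial]
  have : (d.prod fun α k => hibiMonomial K P α ^ k) = monomial (img d) 1 := by
    simp only [Finsupp.prod, img, Finsupp.sum]
    rw [Finset.prod_congr rfl (fun α _ => by
      rw [hibiMonomial_eq, monomial_pow, one_pow])]
    exact prod_monomial_one _ _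
  rw [this]
  simp [algebraMap_eq, C_mul_monomial]

lemma fil_inf (α β : LowerSet P) : fil (α ⊓ β) = fil α ∩ fil β := by
  ext p; simp [fil]
lemma fil_sup (α β : LowerSet P) : fil (α ⊔ β) = fil α ∪ fil β := by
  ext p; simp [fil]

lemma mA_add_mA (α β : LowerSet P) : mA α + mA β = mA (α ⊓ β) + mA (α ⊔ β) := by
  ext x
  cases x with
  | none => simp [mA_none]
  | some p =>
    simp only [Finsupp.add_apply, mA_some]
    by_cases h1 : p ∈ α <;> by_cases h2 : p ∈ β <;>
      simp [h1, h2, LowerSet.mem_inf_iff, LowerSet.mem_sup_iff]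

noncomputable def w (α : LowerSet P) : ℕ := (fil α).card * (fil α).card

noncomputable def mu (d : LowerSet P →₀ ℕ) : ℕ := d.sum fun α k => k * w α

lemma mu_add (d e : LowerSet P →₀ ℕ) : mu (d + e) = mu d + mu e := by
  unfold mu
  apply Finsupp.sum_add_index' (fun α => by simp) (fun α k l => add_mul k l (w α))

lemma mu_single (α : LowerSet P) (k : ℕ) : mu (Finsupp.single α k) = k * w α := by
  unfold mu; rw [Finsupp.sum_single_index]; simp

lemma card_inf_lt_left {α β : LowerSet P} (h : ¬ α ≤ β) : (fil (α ⊓ β)).card < (fil α).card := by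
  apply Finset.card_lt_card
  rw [fil_inf]
  constructor
  · exact Finset.inter_subset_left
  · intro hsub
    apply h
    intro x hx
    have : x ∈ fil α := by
      simp only [fil, Finset.mem_filter]; exact ⟨Finset.mem_univ x, hx⟩
    have := hsub this
    simp [fil, Finset.mem_inter] at this
    exact this.2

lemma card_inf_add_card_sup (α β : LowerSet P) :
    (fil (α ⊓ β)).card + (fil (α ⊔ β)).card = (fil α).card + (fil β).card := by
  rw [fil_inf, fil_sup, Finset.card_inter_add_card_union]

lemma w_incomp {α β : LowerSet P} (h1 : ¬ α ≤ β) (h2 : ¬ β ≤ α) :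
    w α + w β < w (α ⊓ β) + w (α ⊔ β) := by
  have ha := card_inf_lt_left h1
  have hb : (fil (α ⊓ β)).card < (fil β).card := by
    have : (α ⊓ β) = (β ⊓ α) := inf_comm α β
    rw [this]; exact card_inf_lt_left h2
  have hc := card_inf_add_card_sup α β
  unfold w
  clear h1 h2
  nlinarith

lemma w_le (α : LowerSet P) : w α ≤ Fintype.card P * Fintype.card P := by
  have : (fil α).card ≤ Fintype.card P := by
    simpa [fil] using Finset.card_filter_le Finset.univ (fun p => p ∈ α)
  exact Nat.mul_le_mul this this

lemma img_none (d : LowerSet P →₀ ℕ) : img d none = d.sum fun _ k => k := by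
  unfold img
  rw [Finsupp.sum_apply]
  exact Finset.sum_congr rfl fun α _ => by simp [mA_none]

lemma mu_le (d : LowerSet P →₀ ℕ) : mu d ≤ img d none * (Fintype.card P * Fintype.card P) := by
  rw [img_none, mu, Finsupp.sum, Finsupp.sum, Finset.sum_mul]
  exact Finset.sum_le_sum fun α _ => Nat.mul_le_mul_left _ (w_le α)

omit [Fintype P] [PartialOrder P] in
lemma chain_greatest {γ : Type*} [PartialOrder γ] (s : Finset γ) (hne : s.Nonempty)
    (hc : ∀ a ∈ s, ∀ b ∈ s, a ≤ b ∨ b ≤ a) : ∃ τ ∈ s, ∀ a ∈ s, a ≤ τ := by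
  classical
  induction hne using Finset.Nonempty.cons_induction with
  | singleton a => exact ⟨a, Finset.mem_singleton_self a, fun b hb => by
      rw [Finset.mem_singleton.1 hb]⟩
  | cons a s ha hne ih =>
    obtain ⟨τ, hτs, hτ⟩ := ih (fun x hx y hy => hc x (Finset.mem_cons_of_mem hx) y (Finset.mem_cons_of_mem hy))
    rcases hc a (Finset.mem_cons_self a s) τ (Finset.mem_cons_of_mem hτs) with h | h
    · exact ⟨τ, Finset.mem_cons_of_mem hτs, fun b hb => by
        rcases Finset.mem_cons.1 hb with rfl | hb
        · exact h
        · exact hτ b hb⟩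
    · exact ⟨a, Finset.mem_cons_self a s, fun b hb => by
        rcases Finset.mem_cons.1 hb with rfl | hb
        · exact le_rfl
        · exact (hτ b hb).trans h⟩

lemma img_some (d : LowerSet P →₀ ℕ) (p : P) :
    img d (some p) = ∑ α ∈ d.support, d α * (if p ∈ α then 1 else 0) := by
  unfold img
  rw [Finsupp.sum_apply, Finsupp.sum]
  exact Finset.sum_congr rfl fun α _ => by simp [mA_some]

lemma img_some_pos (d : LowerSet P →₀ ℕ) (p : P) :
    0 < img d (some p) ↔ ∃ α ∈ d.support, p ∈ α := by
  rw [img_some]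
  constructor
  · intro h
    by_contra hn
    push_neg at hn
    rw [Finset.sum_eq_zero (fun α hα => by simp [hn α hα])] at h
    exact lt_irrefl 0 h
  · rintro ⟨α, hα, hp⟩
    have h1 : 0 < d α * (if p ∈ α then 1 else 0) := by
      simp [hp]; exact Nat.pos_of_ne_zero (Finsupp.mem_support_iff.1 hα)
    exact lt_of_lt_of_le h1 (Finset.single_le_sum
      (f := fun β => d β * (if p ∈ β then 1 else 0)) (fun β _ => Nat.zero_le _) hα)

lemma total_eq_zero {d : LowerSet P →₀ ℕ} (h : img d none = 0) : d = 0 := by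
  rw [img_none, Finsupp.sum] at h
  ext α
  by_contra hα
  have hm : α ∈ d.support := Finsupp.mem_support_iff.2 (by simpa using hα)
  have := Finset.sum_eq_zero_iff.1 h α hm
  exact (Finsupp.mem_support_iff.1 hm) this

omit [Fintype P] in
lemma decompose {d : LowerSet P →₀ ℕ} {α : LowerSet P} (h : α ∈ d.support) :
    d = (d - Finsupp.single α 1) + Finsupp.single α 1 := by
  have h1 : 1 ≤ d α := Nat.pos_of_ne_zero (Finsupp.mem_support_iff.1 h)
  ext x
  simp only [Finsupp.add_apply, Finsupp.tsub_apply, Finsupp.single_apply]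
  by_cases hx : α = x
  · subst hx; rw [if_pos rfl]; omega
  · simp [hx]

omit [Fintype P] in
lemma sub_support_subset (d : LowerSet P →₀ ℕ) (u : LowerSet P →₀ ℕ) :
    (d - u).support ⊆ d.support := by
  intro x hx
  rw [Finsupp.mem_support_iff] at hx ⊢
  intro h0
  apply hx
  rw [Finsupp.tsub_apply, h0]
  simp

lemma chain_eq (N : ℕ) : ∀ d e : LowerSet P →₀ ℕ, img d none = N →
    (∀ a ∈ d.support, ∀ b ∈ d.support, a ≤ b ∨ b ≤ a) →
    (∀ a ∈ e.support, ∀ b ∈ e.support, a ≤ b ∨ b ≤ a) →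
    img d = img e → d = e := by
  induction N with
  | zero =>
    intro d e hN _ _ himg
    have he0 : e = 0 := total_eq_zero (by rw [← himg]; exact hN)
    rw [total_eq_zero hN, he0]
  | succ n ih =>
    intro d e hN hcd hce himg
    have hdne : d.support.Nonempty := by
      rw [Finset.nonempty_iff_ne_empty]
      intro h
      rw [show d = 0 from Finsupp.support_eq_empty.1 h] at hN
      simp [img_none] at hN
    have hene : e.support.Nonempty := by
      rw [Finset.nonempty_iff_ne_empty]
      intro h
      have he0 : e = 0 := Finsupp.support_eq_empty.1 h
      rw [himg, he0, img_none] at hN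
      simp at hN
    obtain ⟨τ, hτs, hτ⟩ := chain_greatest d.support hdne hcd
    obtain ⟨σ, hσs, hσ⟩ := chain_greatest e.support hene hce
    have hτσ : τ = σ := by
      have k1 : ∀ p : P, p ∈ τ ↔ 0 < img d (some p) := fun p =>
        ⟨fun hp => (img_some_pos d p).2 ⟨τ, hτs, hp⟩,
         fun h => by obtain ⟨α, hα, hp⟩ := (img_some_pos d p).1 h; exact hτ α hα hp⟩
      have k2 : ∀ p : P, p ∈ σ ↔ 0 < img e (some p) := fun p =>
        ⟨fun hp => (img_some_pos e p).2 ⟨σ, hσs, hp⟩,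
         fun h => by obtain ⟨α, hα, hp⟩ := (img_some_pos e p).1 h; exact hσ α hα hp⟩
      exact SetLike.ext fun p => by rw [k1 p, k2 p, himg]
    subst hτσ
    set d' := d - Finsupp.single τ 1 with hd'
    set e' := e - Finsupp.single τ 1 with he'
    have hdd : d = d' + Finsupp.single τ 1 := decompose hτs
    have hee : e = e' + Finsupp.single τ 1 := decompose hσs
    have himg' : img d' = img e' := by
      have h1 : img d' + mA τ = img e' + mA τ := by
        have := himg
        rw [hdd, hee, img_add, img_add, img_single, one_smul] at this
        exact this
      exact add_right_cancel h1
    have hN' : img d' none = n := by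
      have : img d none = img d' none + 1 := by
        rw [hdd, img_add, Finsupp.add_apply, img_single, one_smul, mA_none]
      omega
    have hd'e' : d' = e' := by
      apply ih d' e' hN'
      · exact fun a ha b hb => hcd a (sub_support_subset d _ ha) b (sub_support_subset d _ hb)
      · exact fun a ha b hb => hce a (sub_support_subset e _ ha) b (sub_support_subset e _ hb)
      · exact himg'
    rw [hdd, hee, hd'e']

noncomputable def J (K : Type*) [Field K] (P : Type*) [Fintype P] [PartialOrder P] :
    Ideal (MvPolynomial (LowerSet P) K) :=
  Ideal.span {f : MvPolynomial (LowerSet P) K |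
    ∃ α β : LowerSet P, ¬ α ≤ β ∧ ¬ β ≤ α ∧
      f = X α * X β - X (α ⊓ β) * X (α ⊔ β)}

omit [Fintype P] in
lemma X_eq_monomial (α : LowerSet P) :
    (X α : MvPolynomial (LowerSet P) K) = monomial (Finsupp.single α 1) 1 := by
  rw [← X_pow_eq_monomial, pow_one]

omit [Fintype P] in
lemma monomial_two (e : LowerSet P →₀ ℕ) (α β : LowerSet P) :
    monomial (e + Finsupp.single α 1 + Finsupp.single β 1) (1:K) =
      monomial e 1 * (X α * X β) := by
  rw [X_eq_monomial, X_eq_monomial, monomial_mul, monomial_mul, one_mul, one_mul, add_assoc]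

lemma straighten_mem (e : LowerSet P →₀ ℕ) {α β : LowerSet P} (h1 : ¬ α ≤ β) (h2 : ¬ β ≤ α) :
    monomial (e + Finsupp.single α 1 + Finsupp.single β 1) (1:K) -
      monomial (e + Finsupp.single (α ⊓ β) 1 + Finsupp.single (α ⊔ β) 1) 1 ∈ J K P := by
  rw [monomial_two, monomial_two, ← mul_sub]
  exact Ideal.mul_mem_left _ _ (Ideal.subset_span ⟨α, β, h1, h2, rfl⟩)

lemma straighten_img (e : LowerSet P →₀ ℕ) (α β : LowerSet P) :
    img (e + Finsupp.single α 1 + Finsupp.single β 1) =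
      img (e + Finsupp.single (α ⊓ β) 1 + Finsupp.single (α ⊔ β) 1) := by
  simp only [img_add, img_single, one_smul, add_assoc]
  rw [mA_add_mA]

lemma straighten_mu (e : LowerSet P →₀ ℕ) {α β : LowerSet P} (h1 : ¬ α ≤ β) (h2 : ¬ β ≤ α) :
    mu (e + Finsupp.single α 1 + Finsupp.single β 1) <
      mu (e + Finsupp.single (α ⊓ β) 1 + Finsupp.single (α ⊔ β) 1) := by
  simp only [mu_add, mu_single, one_mul, add_assoc]
  have := w_incomp h1 h2
  omega

omit [Fintype P] in
lemma decompose2 {e : LowerSet P →₀ ℕ} {a b : LowerSet P} (hab : a ≠ b)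
    (ha : a ∈ e.support) (hb : b ∈ e.support) :
    e = (e - Finsupp.single a 1 - Finsupp.single b 1) + Finsupp.single a 1
        + Finsupp.single b 1 := by
  have h1 : 1 ≤ e a := Nat.pos_of_ne_zero (Finsupp.mem_support_iff.1 ha)
  have h2 : 1 ≤ e b := Nat.pos_of_ne_zero (Finsupp.mem_support_iff.1 hb)
  ext x
  simp only [Finsupp.add_apply, Finsupp.tsub_apply, Finsupp.single_apply]
  rcases eq_or_ne a x with rfl | hax
  · rw [if_pos rfl, if_neg (fun h => hab h.symm)]
    omega
  · rw [if_neg hax]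
    rcases eq_or_ne b x with rfl | hbx
    · rw [if_pos rfl]; omega
    · rw [if_neg hbx]; omega

lemma key (k : ℕ) : ∀ d e : LowerSet P →₀ ℕ, img d = img e →
    2 * (img d none) * (Fintype.card P * Fintype.card P) + 2 - (mu d + mu e) ≤ k →
    monomial d (1:K) - monomial e 1 ∈ J K P := by
  induction k with
  | zero =>
    intro d e himg hk
    exfalso
    have h1 := mu_le (P := P) d
    have h2 := mu_le (P := P) e
    rw [← himg] at h2
    have h3 : 2 * (img d none) * (Fintype.card P * Fintype.card P)
        = 2 * ((img d none) * (Fintype.card P * Fintype.card P)) := by ring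
    omega
  | succ k ih =>
    intro d e himg hk
    by_cases hcd : ∀ a ∈ d.support, ∀ b ∈ d.support, a ≤ b ∨ b ≤ a
    · by_cases hce : ∀ a ∈ e.support, ∀ b ∈ e.support, a ≤ b ∨ b ≤ a
      · rw [chain_eq (img d none) d e rfl hcd hce himg, sub_self]
        exact Ideal.zero_mem _
      · push_neg at hce
        obtain ⟨a, ha, b, hb, hab⟩ := hce
        obtain ⟨h1, h2⟩ := hab
        have hne : a ≠ b := fun h => h1 (le_of_eq h)
        set e0 := e - Finsupp.single a 1 - Finsupp.single b 1 with he0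
        have hee : e = e0 + Finsupp.single a 1 + Finsupp.single b 1 := decompose2 hne ha hb
        set e' := e0 + Finsupp.single (a ⊓ b) 1 + Finsupp.single (a ⊔ b) 1 with he'
        have hmem : monomial e (1:K) - monomial e' 1 ∈ J K P := by
          rw [hee]; exact straighten_mem e0 h1 h2
        have himg' : img e = img e' := by rw [hee]; exact straighten_img e0 a b
        have hmu : mu e < mu e' := by rw [hee]; exact straighten_mu e0 h1 h2
        have hih : monomial d (1:K) - monomial e' 1 ∈ J K P := by
          apply ih d e' (himg.trans himg')
          have hb1 := mu_le (P := P) e'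
          rw [← himg', ← himg] at hb1
          have hb2 := mu_le (P := P) d
          have h3 : 2 * (img d none) * (Fintype.card P * Fintype.card P)
              = 2 * ((img d none) * (Fintype.card P * Fintype.card P)) := by ring
          omega
        have := add_mem hih (neg_mem hmem)
        simpa using this
    · push_neg at hcd
      obtain ⟨a, ha, b, hb, hab⟩ := hcd
      obtain ⟨h1, h2⟩ := hab
      have hne : a ≠ b := fun h => h1 (le_of_eq h)
      set d0 := d - Finsupp.single a 1 - Finsupp.single b 1 with hd0
      have hdd : d = d0 + Finsupp.single a 1 + Finsupp.single b 1 := decompose2 hne ha hb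
      set d' := d0 + Finsupp.single (a ⊓ b) 1 + Finsupp.single (a ⊔ b) 1 with hd'
      have hmem : monomial d (1:K) - monomial d' 1 ∈ J K P := by
        rw [hdd]; exact straighten_mem d0 h1 h2
      have himg' : img d = img d' := by rw [hdd]; exact straighten_img d0 a b
      have hmu : mu d < mu d' := by rw [hdd]; exact straighten_mu d0 h1 h2
      have hih : monomial d' (1:K) - monomial e 1 ∈ J K P := by
        apply ih d' e (himg'.symm.trans himg)
        have hb1 := mu_le (P := P) d'
        rw [← himg'] at hb1
        have hb2 := mu_le (P := P) e
        rw [← himg] at hb2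
        rw [← himg']
        have h3 : 2 * (img d none) * (Fintype.card P * Fintype.card P)
            = 2 * ((img d none) * (Fintype.card P * Fintype.card P)) := by ring
        omega
      have := add_mem hmem hih
      simpa using this

lemma key' (d e : LowerSet P →₀ ℕ) (h : img d = img e) :
    monomial d (1:K) - monomial e 1 ∈ J K P :=
  key _ d e h le_rfl

lemma span_le_ker :
    J K P ≤ RingHom.ker (aeval (R := K) (hibiMonomial K P)) := by
  rw [J, Ideal.span_le]
  rintro f ⟨α, β, h1, h2, rfl⟩
  rw [SetLike.mem_coe, RingHom.mem_ker]
  rw [map_sub, map_mul, map_mul, aeval_X, aeval_X, aeval_X, aeval_X]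
  rw [hibiMonomial_eq, hibiMonomial_eq, hibiMonomial_eq, hibiMonomial_eq]
  rw [monomial_mul, monomial_mul, mA_add_mA]
  ring

lemma ker_le_span (n : ℕ) : ∀ f : MvPolynomial (LowerSet P) K,
    aeval (hibiMonomial K P) f = 0 → f.support.card ≤ n → f ∈ J K P := by
  induction n with
  | zero =>
    intro f _ hcard
    have : f = 0 := by
      rw [← MvPolynomial.support_eq_empty, ← Finset.card_eq_zero]
      omega
    rw [this]; exact Ideal.zero_mem _
  | succ n ih =>
    intro f hf hcard
    by_cases hf0 : f = 0
    · rw [hf0]; exact Ideal.zero_mem _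
    obtain ⟨d, hd⟩ := MvPolynomial.support_nonempty.2 hf0
    have hrep : aeval (hibiMonomial K P) f
        = ∑ v ∈ f.support, monomial (img v) (coeff v f) := by
      conv_lhs => rw [f.as_sum]
      rw [map_sum]
      exact Finset.sum_congr rfl fun v _ => aeval_monomial' v _
    have h0 : (0 : K) = ∑ v ∈ f.support, if img v = img d then coeff v f else 0 := by
      have h : coeff (img d) (aeval (hibiMonomial K P) f) = 0 := by rw [hf]; simp
      rw [hrep, MvPolynomial.coeff_sum] at h
      calc (0:K) = ∑ x ∈ f.support, coeff (img d) (monomial (img x) (coeff x f)) := h.symm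
        _ = _ := Finset.sum_congr rfl fun v _ => by rw [coeff_monomial]
    have hex : ∃ e ∈ f.support, e ≠ d ∧ img e = img d := by
      by_contra hno
      push_neg at hno
      have hsum := Finset.sum_eq_single_of_mem
        (f := fun v => if img v = img d then coeff v f else 0) d hd
        (fun v hv hvd => if_neg (hno v hv hvd))
      rw [hsum] at h0
      simp only [if_pos rfl] at h0
      exact (MvPolynomial.mem_support_iff.1 hd) h0.symm
    obtain ⟨e, he, hed, himg⟩ := hex
    set c := coeff d f with hc
    set g := f - c • (monomial d (1:K) - monomial e 1) with hg
    have hgmap : aeval (hibiMonomial K P) g = 0 := by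
      rw [hg, map_sub, hf, map_smul, map_sub, aeval_monomial', aeval_monomial', himg,
        sub_self, smul_zero, sub_zero]
    have hsupp : g.support ⊆ f.support.erase d := by
      intro x hx
      rw [MvPolynomial.mem_support_iff] at hx
      have hcx : coeff x g = coeff x f
          - c * ((if d = x then (1:K) else 0) - (if e = x then 1 else 0)) := by
        rw [hg, MvPolynomial.coeff_sub, MvPolynomial.coeff_smul, MvPolynomial.coeff_sub,
          coeff_monomial, coeff_monomial, smul_eq_mul]
      rw [Finset.mem_erase]
      constructor
      · intro hxd
        subst hxd
        rw [if_pos rfl, if_neg hed] at hcx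
        simp [hc] at hcx
        exact hx hcx
      · rcases eq_or_ne e x with rfl | hex
        · exact he
        · rw [MvPolynomial.mem_support_iff]
          intro hxf
          rcases eq_or_ne d x with rfl | hdx
          · exact (MvPolynomial.mem_support_iff.1 hd) hxf
          · apply hx
            rw [hcx, hxf, if_neg hex, if_neg hdx]; ring
    have hcards : g.support.card ≤ n := by
      have h1 := Finset.card_le_card hsupp
      rw [Finset.card_erase_of_mem hd] at h1
      omega
    have hgJ : g ∈ J K P := ih g hgmap hcards
    have hkey : monomial d (1:K) - monomial e 1 ∈ J K P := key' d e himg.symm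
    have hfg : f = g + c • (monomial d (1:K) - monomial e 1) := (sub_add_cancel f _).symm
    rw [hfg, MvPolynomial.smul_eq_C_mul]
    exact add_mem hgJ (Ideal.mul_mem_left _ _ hkey)

end HibiProof

open MvPolynomial in
/-- **The Hibi ideal is the defining ideal of the Hibi ring.** The kernel of
the `K`-algebra map `K[x_α : α ∈ I(P)] → K[t, y_p : p ∈ P]`,
`x_α ↦ t ∏_{p ∈ α} y_p`, is generated by the Hibi binomials
`x_α x_β - x_{α ⊓ β} x_{α ⊔ β}` for incomparable `α, β ∈ I(P)`. -/
theorem hibi_ideal_eq_ker (K : Type*) [Field K] (P : Type*) [Fintype P]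
    [PartialOrder P] :
    RingHom.ker (aeval (R := K) (hibiMonomial K P)) =
      Ideal.span {f : MvPolynomial (LowerSet P) K |
        ∃ α β : LowerSet P, ¬ α ≤ β ∧ ¬ β ≤ α ∧
          f = X α * X β - X (α ⊓ β) * X (α ⊔ β)} := by
  apply le_antisymm
  · intro f hf
    exact HibiProof.ker_le_span f.support.card f (RingHom.mem_ker.1 hf) le_rfl
  · exact HibiProof.span_le_ker
end

section
/- Let K be a field (or any commutative integral domain), P a finite poset, and for each lower set \alpha of P let u_\alpha = t \prod_{p \in \alpha} y_p in the polynomial ring K[t, y_p : p \in P]. If \alpha_1 \subseteq \alpha_2 \subseteq ... \subseteq \alpha_k and \beta_1 \subseteq \beta_2 \subseteq ... \subseteq \beta_\ell are weakly increasing chains of lower sets of P such that u_{\alpha_1} u_{\alpha_2} \cdots u_{\alpha_k} = u_{\beta_1} u_{\beta_2} \cdots u_{\beta_\ell}, then k = \ell and \alpha_i = \beta_i for all i. (This is the key step showing that the standard monomials of the Hibi ring R[I(P)] are pairwise distinct, establishing axiom (ASL-1).) -/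
open Classical

open MvPolynomial in
/-- The exponent finsupp of `hibiMonomial K P α`. -/
noncomputable def hibiExp {P : Type*} [Fintype P] [PartialOrder P] (α : LowerSet P) :
    Option P →₀ ℕ :=
  Finsupp.single none 1 +
    ∑ p ∈ Finset.univ.filter (· ∈ α), Finsupp.single (some p) 1

open MvPolynomial in
lemma prod_X_eq_monomial {σ K : Type*} [CommSemiring K] {ι : Type*} (s : Finset ι)
    (f : ι → σ) :
    (∏ x ∈ s, (X (f x) : MvPolynomial σ K)) =
      monomial (∑ x ∈ s, Finsupp.single (f x) 1) 1 := by
  classical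
  induction s using Finset.induction_on with
  | empty => simp [monomial_zero']
  | insert _ _ hx ih =>
      rw [Finset.prod_insert hx, Finset.sum_insert hx, ih, X, monomial_mul, one_mul]

open MvPolynomial in
lemma hibiMonomial_eq_monomial (K : Type*) [CommSemiring K] (P : Type*) [Fintype P]
    [PartialOrder P] (α : LowerSet P) :
    hibiMonomial K P α = monomial (hibiExp α) 1 := by
  classical
  rw [hibiMonomial, hibiExp]
  have : (∏ p : P, if p ∈ α then (X (some p) : MvPolynomial (Option P) K) else 1) =
      ∏ p ∈ Finset.univ.filter (· ∈ α), (X (some p) : MvPolynomial (Option P) K) := by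
    rw [Finset.prod_filter]
  rw [this, prod_X_eq_monomial, X, monomial_mul, one_mul]

open MvPolynomial in
lemma prod_monomial_one {σ K : Type*} [CommSemiring K] {ι : Type*} (s : Finset ι)
    (e : ι → (σ →₀ ℕ)) :
    (∏ x ∈ s, (monomial (e x) (1 : K))) = monomial (∑ x ∈ s, e x) 1 := by
  classical
  induction s using Finset.induction_on with
  | empty => simp [monomial_zero']
  | insert _ _ hx ih =>
      rw [Finset.prod_insert hx, Finset.sum_insert hx, ih, monomial_mul, one_mul]

lemma mem_iff_card_le {P : Type*} [Fintype P] [PartialOrder P] {k : ℕ}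
    (α : Fin k → LowerSet P) (hα : Monotone α) (p : P) (i : Fin k) :
    p ∈ α i ↔ k - (i : ℕ) ≤ (Finset.univ.filter fun i' => p ∈ α i').card := by
  classical
  constructor
  · intro hp
    have hsub : Finset.Ici i ⊆ Finset.univ.filter fun i' => p ∈ α i' := by
      intro i' hi'
      simp only [Finset.mem_filter, Finset.mem_univ, true_and]
      exact hα (Finset.mem_Ici.mp hi') hp
    calc k - (i : ℕ) = (Finset.Ici i).card := (Fin.card_Ici i).symm
      _ ≤ _ := Finset.card_le_card hsub
  · intro hc
    by_contra hp
    have hsub : (Finset.univ.filter fun i' => p ∈ α i') ⊆ Finset.Ioi i := by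
      intro i' hi'
      simp only [Finset.mem_filter, Finset.mem_univ, true_and] at hi'
      rw [Finset.mem_Ioi]
      by_contra hle
      exact hp (hα (le_of_not_gt hle) hi')
    have h1 : (Finset.univ.filter fun i' => p ∈ α i').card ≤ k - 1 - (i : ℕ) := by
      calc _ ≤ (Finset.Ioi i).card := Finset.card_le_card hsub
        _ = k - 1 - (i : ℕ) := Fin.card_Ioi i
    have := i.isLt
    omega

/-- **Standard monomials of the Hibi ring are pairwise distinct (ASL-1).**
If `α₁ ⊆ … ⊆ α_k` and `β₁ ⊆ … ⊆ β_ℓ` are weakly increasing chains of lower sets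
of `P` with `u_{α₁} ⋯ u_{α_k} = u_{β₁} ⋯ u_{β_ℓ}`, where
`u_α = t ∏_{p ∈ α} y_p`, then `k = ℓ` and `αᵢ = βᵢ` for all `i`. -/
theorem standard_monomials_distinct (K : Type*) [CommRing K] [IsDomain K]
    (P : Type*) [Fintype P] [PartialOrder P] (k l : ℕ)
    (α : Fin k → LowerSet P) (β : Fin l → LowerSet P)
    (hα : Monotone α) (hβ : Monotone β)
    (h : ∏ i, hibiMonomial K P (α i) = ∏ j, hibiMonomial K P (β j)) :
    k = l ∧ ∀ (i : Fin k) (j : Fin l), (i : ℕ) = (j : ℕ) → α i = β j := by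
  classical
  simp only [hibiMonomial_eq_monomial, prod_monomial_one] at h
  rw [MvPolynomial.monomial_eq_monomial_iff] at h
  have hE : ∑ i, hibiExp (α i) = ∑ j, hibiExp (β j) := by
    rcases h with ⟨hE, -⟩ | ⟨h1, -⟩
    · exact hE
    · exact absurd h1 one_ne_zero
  have hnone : ∀ {m : ℕ} (γ : Fin m → LowerSet P),
      (∑ i, hibiExp (γ i)) none = m := by
    intro m γ
    rw [Finsupp.finset_sum_apply]
    simp [hibiExp, Finsupp.single_apply]
  have hk : k = l := by
    have := DFunLike.congr_fun hE none
    simpa [hnone] using this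
  refine ⟨hk, ?_⟩
  have hsome : ∀ {m : ℕ} (γ : Fin m → LowerSet P) (p : P),
      (∑ i, hibiExp (γ i)) (some p) =
        (Finset.univ.filter fun i => p ∈ γ i).card := by
    intro m γ p
    rw [Finsupp.finset_sum_apply]
    have : ∀ i : Fin m, hibiExp (γ i) (some p) = if p ∈ γ i then 1 else 0 := by
      intro i
      simp [hibiExp, Finsupp.single_apply, Finsupp.finset_sum_apply,
        Finset.sum_ite_eq]
    simp only [this]
    rw [Finset.card_filter]
  intro i j hij
  ext p
  show p ∈ α i ↔ p ∈ β j
  rw [mem_iff_card_le α hα p i, mem_iff_card_le β hβ p j]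
  have hcard : (Finset.univ.filter fun i' => p ∈ α i').card =
      (Finset.univ.filter fun j' => p ∈ β j').card := by
    have := DFunLike.congr_fun hE (some p)
    simpa [hsome] using this
  rw [hcard, hij, hk]
end

section
/- Let P be a finite poset with no element comparable to every other element of P (i.e. the distributive lattice I(P) is simple). Then |P| = rank P + 2 if and only if P is the direct sum of a chain and a single element, i.e. there exists q \in P incomparable to every other element of P such that P \setminus {q} is a chain. (This characterizes, via reg R[I(P)] = |P| - rank P - 1, the simple distributive lattices whose Hibi rings have a linear resolution.) -/
open Classical

section Aux

variable (P : Type*) [Fintype P] [PartialOrder P]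

lemma rankSet_bddAbove : BddAbove {n : ℕ | ∃ f : Fin (n + 1) → P, StrictMono f} := by
  refine ⟨Fintype.card P, fun n hn => ?_⟩
  obtain ⟨f, hf⟩ := hn
  have := Fintype.card_le_of_injective f hf.injective
  simp only [Fintype.card_fin] at this
  omega

lemma rankSet_zero_mem [Nonempty P] :
    0 ∈ {n : ℕ | ∃ f : Fin (n + 1) → P, StrictMono f} := by
  refine ⟨fun _ => Classical.arbitrary P, fun i j h => ?_⟩
  rw [Fin.lt_def] at h
  have := i.isLt; have := j.isLt
  omega

lemma card_ne_subtype (q : P) : Fintype.card {p : P // p ≠ q} = Fintype.card P - 1 := by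
  have h1 : Fintype.card {p : P // p = q} = 1 := Fintype.card_subtype_eq q
  have := Fintype.card_subtype_compl (fun p : P => p = q)
  rw [h1] at this
  convert this using 2

end Aux

/-- **Hibi rings with linear resolution (combinatorial form).** Let `P` be a
finite poset with no element comparable to every other element (i.e. `I(P)` is
simple). Then `|P| = rank P + 2` if and only if `P` is the direct sum of a
chain and a single element: there is `q ∈ P` incomparable to every other
element such that `P \ {q}` is a chain. -/
theorem card_eq_rank_add_two_iff (P : Type*) [Fintype P] [PartialOrder P]
    (hsimple : ¬ ∃ p : P, ∀ q : P, q ≠ p → p ≤ q ∨ q ≤ p) :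
    Fintype.card P = rankN P + 2 ↔
      ∃ q : P, (∀ p : P, p ≠ q → ¬(p ≤ q ∨ q ≤ p)) ∧
        IsChain (· ≤ ·) {p : P | p ≠ q} := by
  have hbdd := rankSet_bddAbove P
  constructor
  · intro hcard
    have hne : Nonempty P := by
      rw [← Fintype.card_pos_iff]; omega
    set r := rankN P with hrdef
    have hr : r ∈ {n : ℕ | ∃ f : Fin (n + 1) → P, StrictMono f} :=
      Nat.sSup_mem ⟨0, rankSet_zero_mem P⟩ hbdd
    obtain ⟨f, hf⟩ := hr
    classical
    set T : Finset P := Finset.image f Finset.univ with hT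
    have hTcard : T.card = r + 1 := by
      rw [hT, Finset.card_image_of_injective _ hf.injective, Finset.card_univ,
        Fintype.card_fin]
    have hcompl : Tᶜ.card = 1 := by
      rw [Finset.card_compl, hTcard]; omega
    obtain ⟨q, hq⟩ := Finset.card_eq_one.mp hcompl
    have hmem : ∀ p : P, p ≠ q → ∃ i, f i = p := by
      intro p hp
      by_contra h
      push_neg at h
      have hpT : p ∈ Tᶜ := by
        rw [Finset.mem_compl, hT]
        simp only [Finset.mem_image, Finset.mem_univ, true_and, not_exists]
        exact h
      rw [hq, Finset.mem_singleton] at hpT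
      exact hp hpT
    have hnotle : ∀ i, ¬ q ≤ f i := by
      intro i hle
      apply hsimple
      refine ⟨f (Fin.last r), fun p hp => ?_⟩
      rcases eq_or_ne p q with rfl | hpq
      · exact Or.inr (hle.trans (hf.monotone (Fin.le_last i)))
      · obtain ⟨j, rfl⟩ := hmem p hpq
        exact Or.inr (hf.monotone (Fin.le_last j))
    have hnotge : ∀ i, ¬ f i ≤ q := by
      intro i hle
      apply hsimple
      refine ⟨f 0, fun p hp => ?_⟩
      rcases eq_or_ne p q with rfl | hpq
      · exact Or.inl ((hf.monotone (Fin.zero_le i)).trans hle)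
      · obtain ⟨j, rfl⟩ := hmem p hpq
        exact Or.inl (hf.monotone (Fin.zero_le j))
    refine ⟨q, fun p hp h => ?_, ?_⟩
    · obtain ⟨i, rfl⟩ := hmem p hp
      rcases h with h | h
      · exact hnotge i h
      · exact hnotle i h
    · intro x hx y hy hxy
      obtain ⟨i, rfl⟩ := hmem x hx
      obtain ⟨j, rfl⟩ := hmem y hy
      rcases lt_trichotomy i j with h | h | h
      · exact Or.inl (hf.monotone h.le)
      · exact absurd (congrArg f h) hxy
      · exact Or.inr (hf.monotone h.le)
  · rintro ⟨q, hq, hchain⟩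
    have hex : ∃ p : P, p ≠ q := by
      by_contra h
      push_neg at h
      exact hsimple ⟨q, fun p hp => absurd (h p) hp⟩
    obtain ⟨p₀, hp₀⟩ := hex
    have hm2 : 2 ≤ Fintype.card P := Fintype.one_lt_card_iff.mpr ⟨p₀, q, hp₀⟩
    set m := Fintype.card P with hm
    letI : LinearOrder {p : P // p ≠ q} :=
      { (inferInstance : PartialOrder {p : P // p ≠ q}) with
        le_total := fun a b => by
          rcases eq_or_ne a b with rfl | hab
          · exact Or.inl le_rfl
          · exact hchain a.2 b.2 (fun h => hab (Subtype.ext h))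
        toDecidableLE := Classical.decRel _ }
    have hcards : Fintype.card {p : P // p ≠ q} = (m - 2) + 1 := by
      rw [card_ne_subtype P q]; omega
    let e := monoEquivOfFin {p : P // p ≠ q} hcards
    have hmem2 : (m - 2) ∈ {n : ℕ | ∃ f : Fin (n + 1) → P, StrictMono f} := by
      refine ⟨fun i => (e i : P), fun i j hij => ?_⟩
      exact e.strictMono hij
    have hub : ∀ n ∈ {n : ℕ | ∃ f : Fin (n + 1) → P, StrictMono f}, n ≤ m - 2 := by
      rintro n ⟨f, hf⟩
      by_cases hqr : ∃ i, f i = q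
      · obtain ⟨i, hi⟩ := hqr
        by_cases hn0 : n = 0
        · omega
        · exfalso
          have hlast : (0 : Fin (n+1)) < Fin.last n := by
            rw [Fin.lt_def]
            simp only [Fin.val_zero, Fin.val_last]
            omega
          rcases eq_or_ne i 0 with rfl | h0
          · have hlt : f 0 < f (Fin.last n) := hf hlast
            exact hq (f (Fin.last n)) (by rw [← hi]; exact hlt.ne')
              (Or.inr (hi ▸ hlt.le))
          · have h0i : (0 : Fin (n+1)) < i := by
              rw [Fin.lt_def]
              simp only [Fin.val_zero]
              exact Nat.pos_of_ne_zero (fun h => h0 (Fin.ext h))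
            have hlt : f 0 < f i := hf h0i
            exact hq (f 0) (fun h => hlt.ne (by rw [h, hi]))
              (Or.inl (hi ▸ hlt.le))
      · push_neg at hqr
        have hg : Function.Injective (fun i : Fin (n+1) => (⟨f i, hqr i⟩ : {p : P // p ≠ q})) := by
          intro a b hab
          exact hf.injective (congrArg Subtype.val hab)
        have := Fintype.card_le_of_injective _ hg
        rw [Fintype.card_fin, hcards] at this
        omega
    have hrank : rankN P = m - 2 := by
      refine le_antisymm (csSup_le ⟨m - 2, hmem2⟩ hub) (le_csSup hbdd hmem2)
    rw [hrank]; omega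
end
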